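/- arXiv:2504.07005 — 2 statements merged into one kernel-verified Lean document; each statement's English description precedes it below -/
import Mathlib

section
/- For every integer k ≥ 1 and every f ∈ B one has γ^k(f) = f + ∑_{j=1}^{k} a_{k,j} · q^{j(j−1)·p^{α+1}/2} · (q^{p^α}−1)^j · T^j · ∇^j(f), where ∇^j is the j-fold composite of ∇. Moreover a_{k,1} = [k]_u for every k ≥ 1. (This is the expansion, used in the proof of Lemma 5.1, of the k-th power of the automorphism Id + T·(q^{p^α}−1)·∇ of B in terms of powers of the q-Higgs derivation ∇.) -/
open Finset
open Polynomial

/-- The q-analogue `[n]_t = ∑_{i=0}^{n-1} t^i`. -/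
def qan {A : Type*} [CommRing A] (t : A) (n : ℕ) : A := ∑ i ∈ Finset.range n, t ^ i

/-- `B := ℤ[q][T]`: the outer variable is `T`, the inner one is `q`. -/
abbrev BTq := Polynomial (Polynomial ℤ)

/-- `u := q^{p^{α+1}} ∈ ℤ[q]`. -/
noncomputable def uPoly (p α : ℕ) : Polynomial ℤ := Polynomial.X ^ p ^ (α + 1)

/-- `γ : B → B`, the `ℤ[q]`-algebra endomorphism with `γ(T) = u·T`. -/
noncomputable def gammaT (p α : ℕ) (f : BTq) : BTq :=
  Polynomial.eval₂ Polynomial.C (Polynomial.C (uPoly p α) * Polynomial.X) f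

/-- `∇ : B → B`, the `ℤ[q]`-linear map with `∇(T^m) = [p]_{q^{p^α}}·[m]_u·T^{m−1}`
(so `γ = Id + (q^{p^α}−1)·T·∇`). -/
noncomputable def nablaT (p α : ℕ) (f : BTq) : BTq :=
  ∑ n ∈ f.support,
    Polynomial.C (f.coeff n * qan ((Polynomial.X : Polynomial ℤ) ^ p ^ α) p *
      qan (uPoly p α) n) * Polynomial.X ^ (n - 1)

/-- The coefficients `a_{k,j} ∈ ℤ[q]`, defined by `a_{k,0} = 1`, `a_{1,1} = 1`,
`a_{k,j} = 0` for `j > k`, and the recursion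
`a_{k+1,j} = a_{k,j}·(1 + (u−1)·[j]_u) + a_{k,j−1}`. -/
noncomputable def aa (p α : ℕ) : ℕ → ℕ → Polynomial ℤ
  | 0, 0 => 1
  | 0, _ + 1 => 0
  | _ + 1, 0 => 1
  | k + 1, j + 1 =>
      aa p α k (j + 1) * (1 + (uPoly p α - 1) * qan (uPoly p α) (j + 1)) + aa p α k j

lemma qan_mul_sub_one {A : Type*} [CommRing A] (t : A) (n : ℕ) :
    qan t n * (t - 1) = t ^ n - 1 := geom_sum_mul t n

lemma qan_succ {A : Type*} [CommRing A] (t : A) (n : ℕ) :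
    qan t (n+1) = t * qan t n + 1 := geom_sum_succ

lemma uval (p α : ℕ) (j : ℕ) :
    1 + (uPoly p α - 1) * qan (uPoly p α) j = uPoly p α ^ j := by
  rw [mul_comm, qan_mul_sub_one]; ring

lemma cW (p α m : ℕ) :
    ((X : Polynomial ℤ) ^ p ^ α - 1) * (qan ((X : Polynomial ℤ) ^ p ^ α) p * qan (uPoly p α) m)
      = uPoly p α ^ m - 1 := by
  have h1 : ((X : Polynomial ℤ) ^ p ^ α - 1) * qan ((X : Polynomial ℤ) ^ p ^ α) p
      = uPoly p α - 1 := by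
    rw [mul_comm, qan_mul_sub_one, ← pow_mul, uPoly, pow_succ]
  rw [← mul_assoc, h1, mul_comm, qan_mul_sub_one]

lemma nablaT_eq_sum (p α : ℕ) (f : BTq) :
    nablaT p α f = f.sum fun n a =>
      Polynomial.C (a * qan ((X : Polynomial ℤ) ^ p ^ α) p * qan (uPoly p α) n) * X ^ (n-1) := rfl

lemma nablaT_add (p α : ℕ) (f g : BTq) :
    nablaT p α (f + g) = nablaT p α f + nablaT p α g := by
  simp only [nablaT_eq_sum]
  apply Polynomial.sum_add_index <;> intros <;> simp [add_mul]

lemma nablaT_monomial (p α m : ℕ) (a : Polynomial ℤ) :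
    nablaT p α (Polynomial.C a * X ^ m) =
      Polynomial.C (a * qan ((X : Polynomial ℤ) ^ p ^ α) p * qan (uPoly p α) m) * X ^ (m-1) := by
  rw [nablaT_eq_sum, Polynomial.C_mul_X_pow_eq_monomial, Polynomial.sum_monomial_index]
  simp

lemma gammaT_add (p α : ℕ) (f g : BTq) :
    gammaT p α (f + g) = gammaT p α f + gammaT p α g := Polynomial.eval₂_add _ _

lemma gammaT_monomial (p α m : ℕ) (a : Polynomial ℤ) :
    gammaT p α (Polynomial.C a * X ^ m) = Polynomial.C (a * uPoly p α ^ m) * X ^ m := by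
  rw [gammaT, Polynomial.eval₂_mul, Polynomial.eval₂_C, Polynomial.eval₂_X_pow, mul_pow,
    ← Polynomial.C_pow, Polynomial.C_mul]
  ring

lemma key1 (p α : ℕ) (f : BTq) :
    gammaT p α f = f + Polynomial.C ((X : Polynomial ℤ) ^ p ^ α - 1) * X * nablaT p α f := by
  induction f using Polynomial.induction_on' with
  | add f g hf hg =>
    rw [gammaT_add, nablaT_add, hf, hg]; ring
  | monomial m a =>
    rw [← Polynomial.C_mul_X_pow_eq_monomial, gammaT_monomial, nablaT_monomial]
    cases m with
    | zero => simp [qan]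
    | succ m' =>
      have hm : (m' + 1) - 1 = m' := rfl
      rw [hm]
      have h := cW p α (m'+1)
      have hc : Polynomial.C (a * uPoly p α ^ (m'+1)) =
          Polynomial.C a + Polynomial.C (((X : Polynomial ℤ) ^ p ^ α - 1) *
            (a * qan ((X : Polynomial ℤ) ^ p ^ α) p * qan (uPoly p α) (m'+1))) := by
        rw [← Polynomial.C_add]; congr 1; linear_combination -(a * h)
      rw [hc, Polynomial.C_mul]
      ring

lemma gammaT_mul (p α : ℕ) (f g : BTq) :
    gammaT p α (f * g) = gammaT p α f * gammaT p α g := Polynomial.eval₂_mul _ _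

lemma aa_zero (p α k : ℕ) : aa p α k 0 = 1 := by cases k <;> rfl

lemma aa_gt (p α : ℕ) : ∀ k j : ℕ, k < j → aa p α k j = 0 := by
  intro k
  induction k with
  | zero => intro j hj; cases j with
    | zero => omega
    | succ j' => rfl
  | succ k ih =>
    intro j hj
    cases j with
    | zero => omega
    | succ j' =>
      show aa p α k (j' + 1) * _ + aa p α k j' = 0
      rw [ih (j'+1) (by omega), ih j' (by omega)]
      ring

lemma aa_rec (p α k j : ℕ) :
    aa p α (k+1) (j+1) = aa p α k (j+1) * uPoly p α ^ (j+1) + aa p α k j := by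
  show aa p α k (j + 1) * (1 + (uPoly p α - 1) * qan (uPoly p α) (j + 1)) + aa p α k j = _
  rw [uval]

lemma tri (j : ℕ) : (j+1)*((j+1)-1)/2 = j*(j-1)/2 + j := by
  rw [← Finset.sum_range_id (j+1), ← Finset.sum_range_id j, Finset.sum_range_succ]

lemma Xe (p α j : ℕ) :
    (Polynomial.X : Polynomial ℤ) ^ ((j+1)*((j+1)-1)/2*p^(α+1)) =
      Polynomial.X ^ (j*(j-1)/2*p^(α+1)) * uPoly p α ^ j := by
  rw [uPoly, ← pow_mul, ← pow_add]
  congr 1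
  rw [tri]
  ring

lemma icc_to_range (n : ℕ) (g : ℕ → BTq) :
    ∑ j ∈ Finset.Icc 1 n, g j = ∑ i ∈ Finset.range n, g (i+1) := by
  rw [← Finset.Ico_add_one_right_eq_Icc, Finset.sum_Ico_eq_sum_range]
  simp [Nat.add_comm]

lemma qan_one {A : Type*} [CommRing A] (t : A) : qan t 1 = 1 := by simp [qan]

lemma aak1 (p α : ℕ) : ∀ k : ℕ, 1 ≤ k → aa p α k 1 = qan (uPoly p α) k := by
  intro k
  induction k with
  | zero => omega
  | succ k ih =>
    intro _
    rw [show (1:ℕ) = 0 + 1 from rfl, aa_rec, aa_zero, qan_succ]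
    cases Nat.eq_zero_or_pos k with
    | inl h => subst h; simp [aa, qan]
    | inr h =>
      rw [ih h]
      ring

lemma gamma_term (p α : ℕ) (A : Polynomial ℤ) (j : ℕ) (f : BTq) :
    gammaT p α (Polynomial.C A * Polynomial.X ^ j * (nablaT p α)^[j] f) =
      Polynomial.C (A * uPoly p α ^ j) * Polynomial.X ^ j * (nablaT p α)^[j] f +
      Polynomial.C (A * uPoly p α ^ j * ((Polynomial.X : Polynomial ℤ) ^ p ^ α - 1)) *
        Polynomial.X ^ (j+1) * (nablaT p α)^[j+1] f := by
  rw [gammaT_mul, gammaT_monomial, key1, Function.iterate_succ_apply']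
  simp only [Polynomial.C_mul, Polynomial.C_sub, Polynomial.C_1]
  ring

lemma main_part (p α : ℕ) : ∀ k : ℕ, 1 ≤ k → ∀ f : BTq,
    (gammaT p α)^[k] f =
      f + ∑ j ∈ Finset.Icc 1 k,
        Polynomial.C (aa p α k j *
            (Polynomial.X : Polynomial ℤ) ^ (j * (j - 1) / 2 * p ^ (α + 1)) *
            ((Polynomial.X : Polynomial ℤ) ^ p ^ α - 1) ^ j) *
          Polynomial.X ^ j * (nablaT p α)^[j] f := by
  intro k hk
  induction k, hk using Nat.le_induction with
  | base =>
    intro f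
    rw [Finset.Icc_self, Finset.sum_singleton, Function.iterate_one, key1]
    have h11 : aa p α 1 1 = 1 := by
      show aa p α 0 1 * _ + aa p α 0 0 = 1
      show (0 : Polynomial ℤ) * _ + 1 = 1
      ring
    norm_num [h11]
  | succ k hk ih =>
    intro f
    rw [Function.iterate_succ_apply', ih f, gammaT_add, key1 p α f]
    rw [show gammaT p α (∑ j ∈ Finset.Icc 1 k,
        Polynomial.C (aa p α k j *
            (Polynomial.X : Polynomial ℤ) ^ (j * (j - 1) / 2 * p ^ (α + 1)) *
            ((Polynomial.X : Polynomial ℤ) ^ p ^ α - 1) ^ j) *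
          Polynomial.X ^ j * (nablaT p α)^[j] f) =
        ∑ j ∈ Finset.Icc 1 k, gammaT p α (Polynomial.C (aa p α k j *
            (Polynomial.X : Polynomial ℤ) ^ (j * (j - 1) / 2 * p ^ (α + 1)) *
            ((Polynomial.X : Polynomial ℤ) ^ p ^ α - 1) ^ j) *
          Polynomial.X ^ j * (nablaT p α)^[j] f)
      from Polynomial.eval₂_finset_sum _ _ _ _]
    simp only [gamma_term, icc_to_range]
    rw [Finset.sum_add_distrib]
    have hsum1 : (∑ i ∈ Finset.range (k+1),
        Polynomial.C (aa p α (k+1) (i+1) * Polynomial.X ^ ((i+1)*(i+1-1)/2*p^(α+1)) *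
          ((Polynomial.X : Polynomial ℤ)^p^α - 1)^(i+1)) * Polynomial.X^(i+1) * (nablaT p α)^[i+1] f)
      = (∑ i ∈ Finset.range (k+1),
          Polynomial.C (aa p α k (i+1) * Polynomial.X ^ ((i+1)*(i+1-1)/2*p^(α+1)) *
            ((Polynomial.X : Polynomial ℤ)^p^α - 1)^(i+1) * uPoly p α ^ (i+1)) *
            Polynomial.X^(i+1) * (nablaT p α)^[i+1] f)
        + ∑ i ∈ Finset.range (k+1),
          Polynomial.C (aa p α k i * Polynomial.X ^ ((i+1)*(i+1-1)/2*p^(α+1)) *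
            ((Polynomial.X : Polynomial ℤ)^p^α - 1)^(i+1)) * Polynomial.X^(i+1) *
            (nablaT p α)^[i+1] f := by
      rw [← Finset.sum_add_distrib]
      refine Finset.sum_congr rfl fun i _ => ?_
      rw [aa_rec]
      simp only [Polynomial.C_add, Polynomial.C_mul, Polynomial.C_sub, Polynomial.C_pow,
        Polynomial.C_1]
      ring
    have hsum2 : (∑ i ∈ Finset.range (k+1),
          Polynomial.C (aa p α k i * Polynomial.X ^ ((i+1)*(i+1-1)/2*p^(α+1)) *
            ((Polynomial.X : Polynomial ℤ)^p^α - 1)^(i+1)) * Polynomial.X^(i+1) *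
            (nablaT p α)^[i+1] f)
      = (∑ i ∈ Finset.range k,
          Polynomial.C (aa p α k (i+1) * Polynomial.X ^ ((i+1)*(i+1-1)/2*p^(α+1)) *
              ((Polynomial.X : Polynomial ℤ)^p^α - 1)^(i+1) * uPoly p α ^ (i+1) *
              ((Polynomial.X : Polynomial ℤ)^p^α - 1)) *
            Polynomial.X^(i+1+1) * (nablaT p α)^[i+1+1] f)
        + Polynomial.C ((Polynomial.X : Polynomial ℤ)^p^α - 1) * Polynomial.X * nablaT p α f := by
      rw [Finset.sum_range_succ']
      refine congrArg₂ (· + ·) ?_ ?_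
      · refine Finset.sum_congr rfl fun i _ => ?_
        rw [Xe p α (i+1), pow_succ]
        simp only [Polynomial.C_add, Polynomial.C_mul, Polynomial.C_sub, Polynomial.C_pow,
          Polynomial.C_1]
        ring
      · norm_num [aa_zero]
    have hsum3 : (∑ i ∈ Finset.range (k+1),
          Polynomial.C (aa p α k (i+1) * Polynomial.X ^ ((i+1)*(i+1-1)/2*p^(α+1)) *
            ((Polynomial.X : Polynomial ℤ)^p^α - 1)^(i+1) * uPoly p α ^ (i+1)) *
            Polynomial.X^(i+1) * (nablaT p α)^[i+1] f)
      = ∑ i ∈ Finset.range k,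
          Polynomial.C (aa p α k (i+1) * Polynomial.X ^ ((i+1)*(i+1-1)/2*p^(α+1)) *
            ((Polynomial.X : Polynomial ℤ)^p^α - 1)^(i+1) * uPoly p α ^ (i+1)) *
            Polynomial.X^(i+1) * (nablaT p α)^[i+1] f := by
      rw [Finset.sum_range_succ, aa_gt p α k (k+1) (Nat.lt_succ_self k)]
      simp
    rw [hsum1, hsum2, hsum3]
    ring

/-- For every `k ≥ 1` and every `f ∈ B`,
`γ^k(f) = f + ∑_{j=1}^{k} a_{k,j}·q^{j(j−1)·p^{α+1}/2}·(q^{p^α}−1)^j·T^j·∇^j(f)`;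
moreover `a_{k,1} = [k]_u` for every `k ≥ 1`. -/
theorem stmt17 (p : ℕ) (hp : p.Prime) (α : ℕ) :
    (∀ k : ℕ, 1 ≤ k → ∀ f : BTq,
      (gammaT p α)^[k] f =
        f + ∑ j ∈ Finset.Icc 1 k,
          Polynomial.C (aa p α k j *
              (Polynomial.X : Polynomial ℤ) ^ (j * (j - 1) / 2 * p ^ (α + 1)) *
              ((Polynomial.X : Polynomial ℤ) ^ p ^ α - 1) ^ j) *
            Polynomial.X ^ j * (nablaT p α)^[j] f) ∧
    (∀ k : ℕ, 1 ≤ k → aa p α k 1 = qan (uPoly p α) k) := by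
  exact ⟨fun k hk f => main_part p α k hk f, aak1 p α⟩
end

section
/- There is a (unique) ring endomorphism φ of S with φ(q) = q^p, φ(T_i) = T_i^p for all i, and φ(ε_i) = T_i^{p−1}·[p]_q·ε_i for all i; and φ is a Frobenius lift: φ(x) − x^p ∈ p·S for every x ∈ S. (This is the δ-ring structure on S = R̃ ⊕ ε·Ω extending that on the chart, with φ(ε·dT_i) = T_i^{p−1}·((q^p−1)/(q−1))·ε·dT_i.) -/
open Finset

set_option synthInstance.maxHeartbeats 1000000
set_option maxHeartbeats 1000000

/-- `B := ℤ[q][T_1,…,T_m]`. -/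
abbrev Bpoly (m : ℕ) := MvPolynomial (Fin m) (Polynomial ℤ)

/-- The polynomial ring `B[ε_1,…,ε_m]`. -/
abbrev Epoly (m : ℕ) := MvPolynomial (Fin m) (Bpoly m)

set_option synthInstance.maxHeartbeats 1000000 in
noncomputable instance epolyCommRing (m : ℕ) : CommRing (Epoly m) := inferInstance

/-- `q ∈ B`. -/
noncomputable def qB (m : ℕ) : Bpoly m := MvPolynomial.C Polynomial.X

/-- The relations `ε_i² = (q−1)·T_i·ε_i` and `ε_i·ε_j = 0` for `i ≠ j`. -/
noncomputable def relSet (m : ℕ) : Set (Epoly m) :=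
  (Set.range fun i : Fin m =>
      (MvPolynomial.X i : Epoly m) ^ 2 -
        MvPolynomial.C ((qB m - 1) * MvPolynomial.X i) * MvPolynomial.X i) ∪
    {x : Epoly m | ∃ i j : Fin m, i ≠ j ∧ x = MvPolynomial.X i * MvPolynomial.X j}

/-- `S := B[ε_1,…,ε_m]/(ε_i² − (q−1)·T_i·ε_i, ε_i·ε_j (i ≠ j))`,
a free `B`-module with basis `1, ε_1, …, ε_m`. -/
abbrev Sring (m : ℕ) := Epoly m ⧸ Ideal.span (relSet m)

/-- The image of `q` in `S`. -/
noncomputable def qS (m : ℕ) : Sring m :=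
  Ideal.Quotient.mk _ (MvPolynomial.C (qB m))

/-- The image of `T_i` in `S`. -/
noncomputable def TS (m : ℕ) (i : Fin m) : Sring m :=
  Ideal.Quotient.mk _ (MvPolynomial.C (MvPolynomial.X i : Bpoly m))

/-- The element `ε_i ∈ S`. -/
noncomputable def epsS (m : ℕ) (i : Fin m) : Sring m :=
  Ideal.Quotient.mk _ (MvPolynomial.X i : Epoly m)

/-! ### Auxiliary lemmas -/


/-- Key congruence: `(X−1)^(p−1) ≡ [p]_X  mod p` in `ℤ[X]`. -/
lemma key_poly (p : ℕ) (hp : p.Prime) :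
    (Polynomial.C (p:ℤ)) ∣
      ((Polynomial.X - 1)^(p-1) - ∑ i ∈ Finset.range p, Polynomial.X ^ i : Polynomial ℤ) := by
  rw [Polynomial.C_dvd_iff_dvd_coeff]
  intro n
  have hmap : Polynomial.map (Int.castRingHom (ZMod p))
      ((Polynomial.X - 1)^(p-1) - ∑ i ∈ Finset.range p, Polynomial.X ^ i : Polynomial ℤ) = 0 := by
    haveI : Fact p.Prime := ⟨hp⟩
    haveI : ExpChar (Polynomial (ZMod p)) p := ExpChar.prime hp
    have hX1 : (Polynomial.X - 1 : Polynomial (ZMod p)) ≠ 0 := by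
      have := Polynomial.X_sub_C_ne_zero (R := ZMod p) 1
      simpa using this
    have hgeom := geom_sum_mul (Polynomial.X : Polynomial (ZMod p)) p
    have hpow : (Polynomial.X - 1 : Polynomial (ZMod p)) ^ p = Polynomial.X ^ p - 1 := by
      have := sub_pow_char (Polynomial.X : Polynomial (ZMod p)) 1 (p := p)
      simpa using this
    have hcancel : (Polynomial.X - 1 : Polynomial (ZMod p)) ^ (p-1)
        = ∑ i ∈ Finset.range p, (Polynomial.X : Polynomial (ZMod p)) ^ i := by
      apply mul_left_cancel₀ hX1
      calc (Polynomial.X - 1 : Polynomial (ZMod p)) * (Polynomial.X - 1) ^ (p-1)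
          = (Polynomial.X - 1) ^ p := by
            rw [← pow_succ']
            congr 1
            have := hp.pos
            omega
        _ = Polynomial.X ^ p - 1 := hpow
        _ = (Polynomial.X - 1) * ∑ i ∈ Finset.range p, Polynomial.X ^ i := by
            rw [mul_comm, hgeom]
    push_cast [Polynomial.map_sub, Polynomial.map_pow, Polynomial.map_sum]
    simp [hcancel]
  have := congrArg (fun f => Polynomial.coeff f n) hmap
  simp only [Polynomial.coeff_map, Polynomial.coeff_zero, Int.coe_castRingHom] at this
  exact (ZMod.intCast_zmod_eq_zero_iff_dvd _ _).mp this

/-- If `e² = c·e` then `e^(k+1) = c^k·e`. -/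
lemma pow_succ_of_sq {R : Type*} [CommRing R] (e c : R) (h : e^2 = c * e) :
    ∀ k, e^(k+1) = c^k * e
  | 0 => by simp
  | k+1 => by
      have ih := pow_succ_of_sq e c h k
      calc e ^ (k+1+1) = e^(k+1) * e := by rw [pow_succ]
        _ = c^k * e^2 := by rw [ih]; ring
        _ = c^(k+1) * e := by rw [h]; ring

/-- The relation `ε_i² = (q−1)·T_i·ε_i` in `S`. -/
lemma rel_sq (m : ℕ) (i : Fin m) :
    epsS m i ^ 2 = (qS m - 1) * TS m i * epsS m i := by
  have hmem : ((MvPolynomial.X i : Epoly m) ^ 2 -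
      MvPolynomial.C ((qB m - 1) * MvPolynomial.X i) * MvPolynomial.X i)
      ∈ Ideal.span (relSet m) :=
    Ideal.subset_span (Or.inl ⟨i, rfl⟩)
  have h0 := (Ideal.Quotient.eq_zero_iff_mem).mpr hmem
  have h1 : epsS m i ^ 2 -
      (Ideal.Quotient.mk _ (MvPolynomial.C ((qB m - 1) * MvPolynomial.X i : Bpoly m)))
        * epsS m i = 0 := by
    rw [← h0]
    simp [epsS, map_sub, map_mul, map_pow]
  have h2 : (Ideal.Quotient.mk (Ideal.span (relSet m))
      (MvPolynomial.C ((qB m - 1) * MvPolynomial.X i : Bpoly m)))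
      = (qS m - 1) * TS m i := by
    rw [map_mul, map_sub]
    simp [qS, TS, map_sub, map_mul, map_one]
  rw [h2] at h1
  linear_combination h1

/-- The relation `ε_i·ε_j = 0` for `i ≠ j` in `S`. -/
lemma rel_mul (m : ℕ) {i j : Fin m} (h : i ≠ j) :
    epsS m i * epsS m j = 0 := by
  have hmem : ((MvPolynomial.X i : Epoly m) * MvPolynomial.X j) ∈ Ideal.span (relSet m) :=
    Ideal.subset_span (Or.inr ⟨i, j, h, rfl⟩)
  have h0 := (Ideal.Quotient.eq_zero_iff_mem).mpr hmem
  rw [map_mul] at h0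
  exact h0

/-- Homomorphism extensionality for `S`: a ring hom out of `S` is determined by the
images of `q`, the `T_i` and the `ε_i`. -/
lemma Sring.hom_ext {m : ℕ} {R : Type*} [CommRing R] {f g : Sring m →+* R}
    (hq : f (qS m) = g (qS m)) (hT : ∀ i, f (TS m i) = g (TS m i))
    (he : ∀ i, f (epsS m i) = g (epsS m i)) : f = g := by
  have hZ : ∀ r : Polynomial ℤ,
      f (Ideal.Quotient.mk _ (MvPolynomial.C (MvPolynomial.C r)))
        = g (Ideal.Quotient.mk _ (MvPolynomial.C (MvPolynomial.C r))) := by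
    intro r
    induction r using Polynomial.induction_on with
    | C a => simp [Polynomial.C_eq_intCast, map_intCast]
    | add u v hu hv => simp only [map_add]; rw [hu, hv]
    | monomial n a _ =>
        have hconst : f (Ideal.Quotient.mk _ (MvPolynomial.C (MvPolynomial.C (Polynomial.C a))))
            = g (Ideal.Quotient.mk _ (MvPolynomial.C (MvPolynomial.C (Polynomial.C a)))) := by
          simp [Polynomial.C_eq_intCast, map_intCast]
        have hx : f (Ideal.Quotient.mk _ (MvPolynomial.C (MvPolynomial.C Polynomial.X)))
            = g (Ideal.Quotient.mk _ (MvPolynomial.C (MvPolynomial.C Polynomial.X))) := by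
          simpa [qS, qB] using hq
        simp only [map_mul, map_pow]
        rw [hconst, hx]
  have hB : ∀ b : Bpoly m,
      f (Ideal.Quotient.mk _ (MvPolynomial.C b)) = g (Ideal.Quotient.mk _ (MvPolynomial.C b)) := by
    intro b
    induction b using MvPolynomial.induction_on with
    | C r => exact hZ r
    | add u v hu hv => simp only [map_add]; rw [hu, hv]
    | mul_X u i ih =>
        simp only [map_mul]
        rw [ih]
        congr 1
        simpa [TS] using hT i
  refine RingHom.ext fun x => ?_
  obtain ⟨y, rfl⟩ := Ideal.Quotient.mk_surjective x
  induction y using MvPolynomial.induction_on with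
  | C b => exact hB b
  | add u v hu hv => simp only [map_add]; rw [hu, hv]
  | mul_X u i ih =>
      simp only [map_mul]
      rw [ih]
      congr 1
      simpa [epsS] using he i

/-- `(q−1)·[p]_q = q^p − 1` in any commutative ring. -/
lemma qan_mul (A : Type*) [CommRing A] (t : A) (n : ℕ) :
    (t - 1) * qan t n = t ^ n - 1 := by
  rw [qan, mul_comm]
  exact geom_sum_mul t n

/-- Construction of the endomorphism `φ` of `S`. -/
noncomputable def phiHom (p m : ℕ) (hp : p.Prime) : Sring m →+* Sring m := by
  refine Ideal.Quotient.lift _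
    (MvPolynomial.eval₂Hom
      (MvPolynomial.eval₂Hom
        (Polynomial.eval₂RingHom (Int.castRingHom (Sring m)) (qS m ^ p))
        (fun i => TS m i ^ p))
      (fun i => TS m i ^ (p - 1) * qan (qS m) p * epsS m i)) ?_
  intro a ha
  rw [← RingHom.mem_ker]
  refine Ideal.span_le.mpr ?_ ha
  rintro x (⟨i, rfl⟩ | ⟨i, j, hij, rfl⟩) <;>
    simp only [SetLike.mem_coe, RingHom.mem_ker, map_sub, map_mul, map_pow,
      MvPolynomial.eval₂Hom_X', MvPolynomial.eval₂Hom_C, qB, Polynomial.eval₂_X,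
      Polynomial.coe_eval₂RingHom, map_one, map_sub]
  · -- square relation
    have hrel := rel_sq m i
    have hgeo := qan_mul (Sring m) (qS m) p
    obtain ⟨k, hk⟩ : ∃ k, p = k + 1 := ⟨p - 1, by have := hp.pos; omega⟩
    have hk' : p - 1 = k := by omega
    rw [hk', hk]
    have expand : (TS m i ^ k * qan (qS m) (k+1) * epsS m i) ^ 2
        = (TS m i ^ k * qan (qS m) (k+1)) ^ 2 * epsS m i ^ 2 := by ring
    rw [expand, hrel]
    rw [hk] at hgeo
    have : (qS m ^ (k+1) - 1) = (qS m - 1) * qan (qS m) (k+1) := hgeo.symm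
    rw [this]
    ring
  · have hrel := rel_mul m hij
    have expand : TS m i ^ (p-1) * qan (qS m) p * epsS m i *
        (TS m j ^ (p-1) * qan (qS m) p * epsS m j)
        = (TS m i ^ (p-1) * TS m j ^ (p-1) * qan (qS m) p ^ 2) * (epsS m i * epsS m j) := by
      ring
    rw [expand, hrel, mul_zero]

lemma phiHom_q (p m : ℕ) (hp : p.Prime) : phiHom p m hp (qS m) = qS m ^ p := by
  simp [phiHom, qS, qB, Ideal.Quotient.lift_mk]

lemma phiHom_T (p m : ℕ) (hp : p.Prime) (i : Fin m) : phiHom p m hp (TS m i) = TS m i ^ p := by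
  simp [phiHom, TS, Ideal.Quotient.lift_mk]

lemma phiHom_eps (p m : ℕ) (hp : p.Prime) (i : Fin m) :
    phiHom p m hp (epsS m i) = TS m i ^ (p - 1) * qan (qS m) p * epsS m i := by
  simp [phiHom, epsS, Ideal.Quotient.lift_mk]

/-- The `p`-power map into `R/(p)` is a ring hom. -/
noncomputable def frobHom (p : ℕ) (hp : p.Prime) (R : Type*) [CommRing R] :
    R →+* R ⧸ Ideal.span {(p : R)} where
  toFun x := Ideal.Quotient.mk _ (x ^ p)
  map_one' := by simp
  map_mul' x y := by simp [mul_pow]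
  map_zero' := by simp [zero_pow hp.ne_zero]
  map_add' x y := by
    have h := add_pow_prime_eq hp x y
    have hpmem : Ideal.Quotient.mk (Ideal.span {(p:R)}) ((p:ℕ):R) = 0 :=
      Ideal.Quotient.eq_zero_iff_mem.mpr (Ideal.subset_span rfl)
    show Ideal.Quotient.mk (Ideal.span {(p:R)}) ((x + y) ^ p)
        = Ideal.Quotient.mk _ (x ^ p) + Ideal.Quotient.mk _ (y ^ p)
    rw [h]
    simp only [map_add, map_mul, hpmem, zero_mul, add_zero]

lemma frobHom_apply (p : ℕ) (hp : p.Prime) (R : Type*) [CommRing R] (x : R) :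
    frobHom p hp R x = Ideal.Quotient.mk _ (x ^ p) := rfl

lemma eps_pow (p m : ℕ) (hp : p.Prime) (i : Fin m) :
    epsS m i ^ p = ((qS m - 1) * TS m i) ^ (p - 1) * epsS m i := by
  obtain ⟨k, hk⟩ : ∃ k, p = k + 1 := ⟨p - 1, by have := hp.pos; omega⟩
  have hk' : p - 1 = k := by omega
  rw [hk]
  simpa using pow_succ_of_sq _ _ (rel_sq m i) k

lemma qan_cong (p m : ℕ) (hp : p.Prime) :
    (p : Sring m) ∣ ((qS m - 1) ^ (p - 1) - qan (qS m) p) := by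
  have h0 := key_poly p hp
  have h1 := map_dvd (Polynomial.aeval (qS m) : Polynomial ℤ →ₐ[ℤ] Sring m) h0
  simpa [qan, map_sub, map_pow, map_sum, Polynomial.aeval_X, map_one] using h1

/-- Any endomorphism with the given values on generators is a Frobenius lift. -/
lemma frob_lift (p : ℕ) (hp : p.Prime) (m : ℕ) (φ : Sring m →+* Sring m)
    (h1 : φ (qS m) = qS m ^ p)
    (h2 : ∀ i : Fin m, φ (TS m i) = TS m i ^ p)
    (h3 : ∀ i : Fin m, φ (epsS m i) = TS m i ^ (p - 1) * qan (qS m) p * epsS m i) :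
    ∀ x : Sring m, φ x - x ^ p ∈ Ideal.span {(p : Sring m)} := by
  have main : (Ideal.Quotient.mk (Ideal.span {(p : Sring m)})).comp φ
      = frobHom p hp (Sring m) := by
    apply Sring.hom_ext (R := Sring m ⧸ Ideal.span {(p : Sring m)})
    · rw [RingHom.comp_apply, h1, frobHom_apply]
    · intro i
      rw [RingHom.comp_apply, h2 i, frobHom_apply]
    · intro i
      rw [RingHom.comp_apply, h3 i, frobHom_apply, Ideal.Quotient.eq]
      rw [eps_pow p m hp i]
      rw [Ideal.mem_span_singleton]
      have hdvd := qan_cong p m hp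
      have hexp : TS m i ^ (p - 1) * qan (qS m) p * epsS m i -
          ((qS m - 1) * TS m i) ^ (p - 1) * epsS m i
          = (-(TS m i ^ (p - 1) * epsS m i)) * ((qS m - 1) ^ (p - 1) - qan (qS m) p) := by
        rw [mul_pow]
        ring
      rw [hexp]
      exact hdvd.mul_left _
  intro x
  have hx := RingHom.congr_fun main x
  simp only [RingHom.comp_apply, frobHom_apply] at hx
  rw [← Ideal.Quotient.eq_zero_iff_mem, map_sub, hx, sub_self]

/-- There is a unique ring endomorphism `φ` of `S` with `φ(q) = q^p`,
`φ(T_i) = T_i^p` and `φ(ε_i) = T_i^{p−1}·[p]_q·ε_i` for all `i`; and any such `φ` is a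
Frobenius lift: `φ(x) − x^p ∈ p·S` for every `x ∈ S`. -/
theorem stmt18 (p : ℕ) (hp : p.Prime) (m : ℕ) (hm : 1 ≤ m) :
    (∃! φ : Sring m →+* Sring m,
      φ (qS m) = qS m ^ p ∧
      (∀ i : Fin m, φ (TS m i) = TS m i ^ p) ∧
      (∀ i : Fin m, φ (epsS m i) = TS m i ^ (p - 1) * qan (qS m) p * epsS m i)) ∧
    (∀ φ : Sring m →+* Sring m,
      (φ (qS m) = qS m ^ p ∧
        (∀ i : Fin m, φ (TS m i) = TS m i ^ p) ∧
        (∀ i : Fin m, φ (epsS m i) = TS m i ^ (p - 1) * qan (qS m) p * epsS m i)) →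
      ∀ x : Sring m, φ x - x ^ p ∈ Ideal.span {(p : Sring m)}) := by
  constructor
  · refine ⟨phiHom p m hp, ⟨phiHom_q p m hp, phiHom_T p m hp, phiHom_eps p m hp⟩, ?_⟩
    rintro φ' ⟨hq', hT', he'⟩
    exact Sring.hom_ext (by rw [hq', phiHom_q]) (fun i => by rw [hT' i, phiHom_T])
      (fun i => by rw [he' i, phiHom_eps])
  · rintro φ ⟨hq', hT', he'⟩
    exact frob_lift p hp m φ hq' hT' he'
end
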